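/- Fix k ≥ 2. For i = 1,…,k let y_i = q^{h̄_i}·∏_{n≥1, n≢0,±i mod 2k+1} 1/(1-q^n), where h̄_i = (6i²-6i+1+6k²-12ki+5k)/(12(2k+1)). Then ∏_{i=1}^k y_i = q^{k(k-1)/12}·((q^{2k+1};q^{2k+1})_∞/(q;q)_∞)^{k-1} = (η((2k+1)τ)/η(τ))^{k-1}. -/

import Mathlib

open scoped BigOperators Real

open Complex

lemma aux_ne {c : ℂ} (hc : ‖c‖ < 1) (n : ℕ) : 1 - c ^ (n + 1) ≠ 0 := by
  have h1 : ‖c ^ (n + 1)‖ < 1 := by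
    rw [norm_pow]
    exact pow_lt_one₀ (norm_nonneg c) hc (by omega)
  intro h
  rw [sub_eq_zero] at h
  rw [← h] at h1
  simp at h1

lemma aux_arg {c : ℂ} (hc : ‖c‖ < 1) (n : ℕ) : (1 - c ^ (n + 1)).arg ≠ π := by
  intro h
  have h2 := (Complex.arg_eq_pi_iff.mp h).1
  have h3 : (c ^ (n + 1)).re ≤ ‖c ^ (n + 1)‖ := Complex.re_le_norm _
  have h4 : ‖c ^ (n + 1)‖ < 1 := by
    rw [norm_pow]; exact pow_lt_one₀ (norm_nonneg c) hc (by omega)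
  simp only [Complex.sub_re, Complex.one_re] at h2
  linarith

lemma summable_norm_log_aux {c : ℂ} (hc : ‖c‖ < 1) :
    Summable fun n : ℕ => ‖Complex.log (1 - c ^ (n + 1))‖ := by
  have hgeo : Summable fun n : ℕ => ((1 - ‖c‖)⁻¹ / 2 + 1) * ‖c‖ ^ (n + 1) := by
    apply Summable.mul_left
    simp_rw [pow_succ']
    exact (summable_geometric_of_lt_one (norm_nonneg c) hc).mul_left _
  apply hgeo.of_nonneg_of_le (fun n => norm_nonneg _)
  intro n
  have hz : ‖c ^ (n + 1)‖ < 1 := by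
    rw [norm_pow]; exact pow_lt_one₀ (norm_nonneg c) hc (by omega)
  have hz' : ‖c ^ (n + 1)‖ ≤ ‖c‖ := by
    rw [norm_pow]; exact pow_le_of_le_one (norm_nonneg c) hc.le (by omega)
  have h1 : ‖Complex.log (1 - c ^ (n + 1))‖
      ≤ ‖-(c ^ (n + 1))‖ ^ 2 * (1 - ‖-(c ^ (n + 1))‖)⁻¹ / 2 + ‖-(c ^ (n + 1))‖ := by
    rw [sub_eq_add_neg]
    exact Complex.norm_log_one_add_le (by simpa using hz)
  rw [norm_neg] at h1
  have e1 : (1 - ‖c ^ (n + 1)‖)⁻¹ ≤ (1 - ‖c‖)⁻¹ := by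
    apply inv_anti₀ (by linarith)
    linarith
  have e2 : (0:ℝ) ≤ ‖c ^ (n + 1)‖ := norm_nonneg _
  have hnorm : ‖c ^ (n+1)‖ = ‖c‖ ^ (n+1) := norm_pow c (n+1)
  rw [hnorm] at h1 e1 e2 hz hz'
  have hs2 : ‖c‖ ^ (n + 1) * ‖c‖ ^ (n + 1) ≤ ‖c‖ ^ (n + 1) := by nlinarith
  have e3 : (‖c‖ ^ (n + 1)) ^ 2 * (1 - ‖c‖ ^ (n + 1))⁻¹
      ≤ ‖c‖ ^ (n + 1) * (1 - ‖c‖)⁻¹ := by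
    rw [sq]
    exact mul_le_mul hs2 e1 (inv_nonneg.mpr (by linarith)) e2
  nlinarith

lemma mult_one_sub {c : ℂ} (hc : ‖c‖ < 1) : Multipliable fun n : ℕ => 1 - c ^ (n + 1) :=
  Complex.multipliable_of_summable_log (summable_norm_log_aux hc).of_norm

lemma tprod_ne_zero_aux {c : ℂ} (hc : ‖c‖ < 1) : (∏' n : ℕ, (1 - c ^ (n + 1))) ≠ 0 := by
  have h := Complex.cexp_tsum_eq_tprod (fun n => aux_ne hc n) (summable_norm_log_aux hc).of_norm
  rw [← h]
  exact Complex.exp_ne_zero _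

lemma mult_ite_inv {c : ℂ} (hc : ‖c‖ < 1) (p : ℕ → Prop) [DecidablePred p] :
    Multipliable fun n : ℕ => if p n then (1 - c ^ (n + 1))⁻¹ else 1 := by
  apply Complex.multipliable_of_summable_log
  · apply (summable_norm_log_aux hc).of_norm_bounded
    intro n
    split
    · rw [Complex.log_inv _ (aux_arg hc n), norm_neg]
    · simp

lemma mult_pow_aux {u : ℕ → ℂ} (hu : Multipliable u) (m : ℕ) :
    Multipliable fun n => u n ^ m := by
  induction m with
  | zero => simpa using multipliable_one
  | succ m ih => simp_rw [pow_succ]; exact ih.mul hu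

lemma tprod_pow_aux {u : ℕ → ℂ} (hu : Multipliable u) (m : ℕ) :
    ∏' n, u n ^ m = (∏' n, u n) ^ m := by
  induction m with
  | zero => simp
  | succ m ih => simp_rw [pow_succ]; rw [(mult_pow_aux hu m).tprod_mul hu, ih]

lemma sum_Icc_aux (m : ℕ) :
    (∑ i ∈ Finset.Icc 1 m, ((i : ℂ)) = m * (m + 1) / 2) ∧
    (∑ i ∈ Finset.Icc 1 m, ((i : ℂ) ^ 2) = m * (m + 1) * (2 * m + 1) / 6) := by
  induction m with
  | zero => simp
  | succ m ih =>
    obtain ⟨h1, h2⟩ := ih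
    constructor
    · rw [Finset.sum_Icc_succ_top (by omega), h1]; push_cast; ring
    · rw [Finset.sum_Icc_succ_top (by omega), h2]; push_cast; ring

/-- Dedekind eta function (q-product form). -/
noncomputable def dedekindEta (τ : ℂ) : ℂ :=
  Complex.exp (2 * π * I * τ / 24) * ∏' n : ℕ, (1 - Complex.exp (2 * π * I * τ) ^ (n + 1))

/-- The product of all `k` modified characters of central charge `c_{2,2k+1}`:
`∏_{i=1}^k yᵢ = q^{k(k-1)/12}((q^{2k+1};q^{2k+1})_∞/(q;q)_∞)^{k-1}
             = (η((2k+1)τ)/η(τ))^{k-1}`. -/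
theorem product_of_modified_characters (k : ℕ) (hk : 2 ≤ k) (τ : ℂ) (hτ : 0 < τ.im)
    (q : ℂ) (hq : q = Complex.exp (2 * π * I * τ)) (hbar : ℕ → ℂ)
    (hh : ∀ i, hbar i = (6 * (i : ℂ) ^ 2 - 6 * i + 1 + 6 * (k : ℂ) ^ 2 - 12 * k * i + 5 * k)
        / (12 * (2 * (k : ℂ) + 1)))
    (y : ℕ → ℂ)
    (hy : ∀ i, y i = Complex.exp (2 * π * I * τ * hbar i) * ∏' n : ℕ,
      if ¬((n + 1) % (2 * k + 1) = 0 ∨ (n + 1) % (2 * k + 1) = i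
          ∨ (n + 1 + i) % (2 * k + 1) = 0) then (1 - q ^ (n + 1))⁻¹ else 1) :
    ∏ i ∈ Finset.Icc 1 k, y i
        = Complex.exp (2 * π * I * τ * ((k : ℂ) * ((k : ℂ) - 1) / 12))
          * ((∏' n : ℕ, (1 - (q ^ (2 * k + 1)) ^ (n + 1))) / ∏' n : ℕ, (1 - q ^ (n + 1)))
              ^ (k - 1) ∧
      ∏ i ∈ Finset.Icc 1 k, y i
        = (dedekindEta ((2 * (k : ℂ) + 1) * τ) / dedekindEta τ) ^ (k - 1) := by
  have hqn : ‖q‖ < 1 := by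
    rw [hq, Complex.norm_exp, Real.exp_lt_one_iff]
    have hre : (2 * (π : ℂ) * I * τ).re = -(2 * π * τ.im) := by
      simp [Complex.mul_re, Complex.mul_im]
    rw [hre]
    nlinarith [Real.pi_pos]
  have h2k1 : (2 * (k : ℂ) + 1) ≠ 0 := by
    have h : (2 * (k : ℂ) + 1) = ((2 * k + 1 : ℕ) : ℂ) := by push_cast; ring
    rw [h]
    exact Nat.cast_ne_zero.mpr (by omega)
  have hsum : ∑ i ∈ Finset.Icc 1 k, hbar i = (k : ℂ) * ((k : ℂ) - 1) / 12 := by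
    have H : ∀ m : ℕ, ∑ i ∈ Finset.Icc 1 m,
        (6 * (i : ℂ) ^ 2 - 6 * (i : ℂ) + 1 + 6 * (k : ℂ) ^ 2 - 12 * (k : ℂ) * (i : ℂ)
          + 5 * (k : ℂ))
        = 2 * (m : ℂ) ^ 3 + 3 * (m : ℂ) ^ 2 + (m : ℂ) - 3 * ((m : ℂ) ^ 2 + (m : ℂ))
          + (m : ℂ) * (1 + 6 * (k : ℂ) ^ 2 + 5 * (k : ℂ))
          - 6 * (k : ℂ) * ((m : ℂ) ^ 2 + (m : ℂ)) := by
      intro m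
      induction m with
      | zero => simp
      | succ m ih =>
        rw [Finset.sum_Icc_succ_top (by omega), ih]
        push_cast
        ring
    calc ∑ i ∈ Finset.Icc 1 k, hbar i
        = (∑ i ∈ Finset.Icc 1 k,
            (6 * (i : ℂ) ^ 2 - 6 * (i : ℂ) + 1 + 6 * (k : ℂ) ^ 2 - 12 * (k : ℂ) * (i : ℂ)
              + 5 * (k : ℂ))) / (12 * (2 * (k : ℂ) + 1)) := by
          rw [Finset.sum_div]
          exact Finset.sum_congr rfl fun i _ => hh i
      _ = (k : ℂ) * ((k : ℂ) - 1) / 12 := by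
          rw [H k]
          field_simp
          ring
  have hexp_part : (∏ i ∈ Finset.Icc 1 k, Complex.exp (2 * π * I * τ * hbar i))
      = Complex.exp (2 * π * I * τ * ((k : ℂ) * ((k : ℂ) - 1) / 12)) := by
    rw [← Complex.exp_sum, ← Finset.mul_sum, hsum]
  have hqN : ‖q ^ (2 * k + 1)‖ < 1 := by
    rw [norm_pow]
    exact pow_lt_one₀ (norm_nonneg q) hqn (by omega)
  have hmultH : Multipliable (fun n : ℕ =>
      if ¬((n + 1) % (2 * k + 1) = 0) then (1 - q ^ (n + 1))⁻¹ else 1) :=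
    mult_ite_inv hqn _
  -- pointwise: each factor appears in exactly `k-1` (or `0`) of the characters
  have hpt : ∀ n : ℕ, (∏ i ∈ Finset.Icc 1 k,
      if ¬((n + 1) % (2 * k + 1) = 0 ∨ (n + 1) % (2 * k + 1) = i
          ∨ (n + 1 + i) % (2 * k + 1) = 0) then (1 - q ^ (n + 1))⁻¹ else 1)
      = (if ¬((n + 1) % (2 * k + 1) = 0) then (1 - q ^ (n + 1))⁻¹ else 1) ^ (k - 1) := by
    intro n
    by_cases hr : (n + 1) % (2 * k + 1) = 0
    · rw [if_neg (by simp [hr]), one_pow]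
      exact Finset.prod_eq_one fun i _ => if_neg (by simp [hr])
    · rw [if_pos hr]
      have hrlt : (n + 1) % (2 * k + 1) < 2 * k + 1 := Nat.mod_lt _ (by omega)
      set r := (n + 1) % (2 * k + 1) with hrdef
      set i0 := if r ≤ k then r else 2 * k + 1 - r with hi0
      have hi0mem : i0 ∈ Finset.Icc 1 k := by
        rw [Finset.mem_Icc, hi0]
        split <;> omega
      have hcond : ∀ i ∈ Finset.Icc 1 k,
          ((r = i ∨ (n + 1 + i) % (2 * k + 1) = 0) ↔ i = i0) := by
        intro i hi
        rw [Finset.mem_Icc] at hi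
        have hmod : (n + 1 + i) % (2 * k + 1) = (r + i) % (2 * k + 1) := by
          rw [Nat.add_mod, Nat.mod_eq_of_lt (show i < 2 * k + 1 by omega), ← hrdef]
        have hiff : (r + i) % (2 * k + 1) = 0 ↔ r + i = 2 * k + 1 := by
          constructor
          · intro h
            obtain ⟨c, hc⟩ := Nat.dvd_of_mod_eq_zero h
            rcases c with _ | _ | c
            · simp at hc; omega
            · simpa using hc
            · exfalso
              have h2 : (2 * k + 1) * 2 ≤ (2 * k + 1) * (c + 1 + 1) :=
                Nat.mul_le_mul_left _ (by omega)
              have h4 : (2 * k + 1) * 2 ≤ r + i := by rw [hc]; exact h2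
              omega
          · intro h
            rw [h, Nat.mod_self]
        rw [hmod, hiff, hi0]
        split_ifs with h <;> omega
      have hBC : r = i0 ∨ (n + 1 + i0) % (2 * k + 1) = 0 := (hcond i0 hi0mem).mpr rfl
      have h1 : (if ¬(r = 0 ∨ r = i0 ∨ (n + 1 + i0) % (2 * k + 1) = 0)
          then (1 - q ^ (n + 1))⁻¹ else 1) = 1 :=
        if_neg (not_not_intro (Or.inr hBC))
      rw [← Finset.mul_prod_erase _ _ hi0mem, h1, one_mul]
      have h2 : ∀ i ∈ (Finset.Icc 1 k).erase i0,
          (if ¬(r = 0 ∨ r = i ∨ (n + 1 + i) % (2 * k + 1) = 0)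
            then (1 - q ^ (n + 1))⁻¹ else 1) = (1 - q ^ (n + 1))⁻¹ := by
        intro i hi
        rw [Finset.mem_erase] at hi
        refine if_pos ?_
        rintro (h | h | h)
        · exact hr h
        · exact hi.1 ((hcond i hi.2).mp (Or.inl h))
        · exact hi.1 ((hcond i hi.2).mp (Or.inr h))
      rw [Finset.prod_congr rfl h2, Finset.prod_const,
        Finset.card_erase_of_mem hi0mem, Nat.card_Icc]
      congr 1
  -- the product of the infinite products
  have hprod_part : (∏ i ∈ Finset.Icc 1 k, ∏' n : ℕ,
      if ¬((n + 1) % (2 * k + 1) = 0 ∨ (n + 1) % (2 * k + 1) = i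
          ∨ (n + 1 + i) % (2 * k + 1) = 0) then (1 - q ^ (n + 1))⁻¹ else 1)
      = ((∏' n : ℕ, (1 - (q ^ (2 * k + 1)) ^ (n + 1))) / ∏' n : ℕ, (1 - q ^ (n + 1)))
          ^ (k - 1) := by
    have hg : ∀ i ∈ Finset.Icc 1 k, Multipliable (fun n : ℕ =>
        if ¬((n + 1) % (2 * k + 1) = 0 ∨ (n + 1) % (2 * k + 1) = i
          ∨ (n + 1 + i) % (2 * k + 1) = 0) then (1 - q ^ (n + 1))⁻¹ else 1) :=
      fun i _ => mult_ite_inv hqn _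
    rw [← Multipliable.tprod_finsetProd hg, tprod_congr hpt, tprod_pow_aux hmultH]
    congr 1
    rw [eq_div_iff (tprod_ne_zero_aux hqn), ← hmultH.tprod_mul (mult_one_sub hqn)]
    have hHf : ∀ n : ℕ,
        (if ¬((n + 1) % (2 * k + 1) = 0) then (1 - q ^ (n + 1))⁻¹ else 1) * (1 - q ^ (n + 1))
        = (if (n + 1) % (2 * k + 1) = 0 then 1 - q ^ (n + 1) else 1) := by
      intro n
      by_cases h : (n + 1) % (2 * k + 1) = 0
      · simp [h]
      · simp [h, inv_mul_cancel₀ (aux_ne hqn n)]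
    rw [tprod_congr hHf]
    have hinj : Function.Injective (fun m : ℕ => (2 * k + 1) * m + 2 * k) := by
      intro a b hab
      dsimp only at hab
      have h := Nat.add_right_cancel hab
      exact Nat.eq_of_mul_eq_mul_left (by omega) h
    have hsupp : Function.mulSupport
        (fun n : ℕ => if (n + 1) % (2 * k + 1) = 0 then 1 - q ^ (n + 1) else 1)
        ⊆ Set.range (fun m : ℕ => (2 * k + 1) * m + 2 * k) := by
      intro n hn
      simp only [Function.mem_mulSupport] at hn
      by_cases h : (n + 1) % (2 * k + 1) = 0
      · obtain ⟨c, hc⟩ := Nat.dvd_of_mod_eq_zero h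
        rcases c with _ | c
        · simp at hc
        · obtain ⟨t, ht⟩ : ∃ t, (2 * k + 1) * c = t := ⟨_, rfl⟩
          refine ⟨c, ?_⟩
          show (2 * k + 1) * c + 2 * k = n
          have h5 : n + 1 = t + (2 * k + 1) := by rw [hc, ← ht]; ring
          rw [ht]
          omega
      · simp [h] at hn
    rw [← hinj.tprod_eq hsupp]
    refine tprod_congr fun m => ?_
    show (if ((2 * k + 1) * m + 2 * k + 1) % (2 * k + 1) = 0
        then 1 - q ^ ((2 * k + 1) * m + 2 * k + 1) else 1) = 1 - (q ^ (2 * k + 1)) ^ (m + 1)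
    have h1 : (2 * k + 1) * m + 2 * k + 1 = (2 * k + 1) * (m + 1) := by ring
    rw [h1, Nat.mul_mod_right, if_pos rfl, pow_mul]
  -- assemble
  have main : ∏ i ∈ Finset.Icc 1 k, y i
      = Complex.exp (2 * π * I * τ * ((k : ℂ) * ((k : ℂ) - 1) / 12))
        * ((∏' n : ℕ, (1 - (q ^ (2 * k + 1)) ^ (n + 1))) / ∏' n : ℕ, (1 - q ^ (n + 1)))
            ^ (k - 1) := by
    calc ∏ i ∈ Finset.Icc 1 k, y i
        = ∏ i ∈ Finset.Icc 1 k, (Complex.exp (2 * π * I * τ * hbar i) * ∏' n : ℕ,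
            if ¬((n + 1) % (2 * k + 1) = 0 ∨ (n + 1) % (2 * k + 1) = i
              ∨ (n + 1 + i) % (2 * k + 1) = 0) then (1 - q ^ (n + 1))⁻¹ else 1) :=
          Finset.prod_congr rfl fun i _ => hy i
      _ = (∏ i ∈ Finset.Icc 1 k, Complex.exp (2 * π * I * τ * hbar i))
          * ∏ i ∈ Finset.Icc 1 k, ∏' n : ℕ,
            if ¬((n + 1) % (2 * k + 1) = 0 ∨ (n + 1) % (2 * k + 1) = i
              ∨ (n + 1 + i) % (2 * k + 1) = 0) then (1 - q ^ (n + 1))⁻¹ else 1 :=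
          Finset.prod_mul_distrib
      _ = _ := by rw [hexp_part, hprod_part]
  refine ⟨main, main.trans ?_⟩
  have he : Complex.exp (2 * π * I * ((2 * (k : ℂ) + 1) * τ)) = q ^ (2 * k + 1) := by
    rw [hq, ← Complex.exp_nat_mul]
    congr 1
    push_cast
    ring
  simp only [dedekindEta, he, ← hq]
  rw [mul_div_mul_comm, ← Complex.exp_sub, mul_pow]
  congr 1
  rw [← Complex.exp_nat_mul]
  congr 1
  rw [Nat.cast_sub (by omega : 1 ≤ k), Nat.cast_one]
  ring
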